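/- Let A(z) = A_0 + A_1 z have a resolvent with isolated singularities at distinct points z_1, …, z_m with basic solutions {R_{k,-1}, R_{k,0}} of the fundamental equations for the shifted pencils A(z) = (A_0 + A_1 z_k) + A_1(z - z_k) on punctured disks around each z_k. Define P_k = R_{k,-1}A_1 ∈ L(H) and Q_k = A_1 R_{k,-1} ∈ L(K). Then P_k P_ℓ = 0 and Q_k Q_ℓ = 0 whenever k ≠ ℓ. -/

import Mathlib

open Filter

section LaurentAux

variable {E : Type*} [NormedAddCommGroup E] [NormedSpace ℂ E]

/-- From `limsup (f j)^(1/j) ≤ 0` deduce superexponential decay. -/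
lemma quasi_of_limsup {f : ℕ → ℝ} (hf0 : ∀ n, 0 ≤ f n) {C : ℝ} (hC : 0 ≤ C)
    (hfC : ∀ n, f n ≤ C ^ n)
    (h : limsup (fun j : ℕ => f j ^ ((j : ℝ)⁻¹)) atTop ≤ 0) :
    ∀ ε : ℝ, 0 < ε → ∀ᶠ n : ℕ in atTop, f n ≤ ε ^ n := by
  intro ε hε
  have hb : IsBoundedUnder (· ≤ ·) atTop (fun j : ℕ => f j ^ ((j : ℝ)⁻¹)) := by
    refine ⟨max C 1, ?_⟩
    rw [Filter.eventually_map]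
    filter_upwards [eventually_ge_atTop 1] with j hj
    have hj0 : (j : ℕ) ≠ 0 := by omega
    calc f j ^ ((j : ℝ)⁻¹) ≤ (C ^ j) ^ ((j : ℝ)⁻¹) :=
          Real.rpow_le_rpow (hf0 j) (hfC j) (by positivity)
      _ = C := Real.pow_rpow_inv_natCast hC hj0
      _ ≤ max C 1 := le_max_left _ _
  have h2 : ∀ᶠ j : ℕ in atTop, f j ^ ((j : ℝ)⁻¹) < ε :=
    eventually_lt_of_limsup_lt (lt_of_le_of_lt h hε) hb
  filter_upwards [h2, eventually_ge_atTop 1] with j hj hj1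
  have hj0 : (j : ℝ) ≠ 0 := by positivity
  have : (f j ^ ((j : ℝ)⁻¹)) ^ (j : ℕ) ≤ ε ^ j :=
    pow_le_pow_left₀ (Real.rpow_nonneg (hf0 j) _) hj.le j
  rwa [← Real.rpow_natCast (f j ^ ((j : ℝ)⁻¹)) j, ← Real.rpow_mul (hf0 j),
    inv_mul_cancel₀ hj0, Real.rpow_one] at this

lemma quasi_of_le {f g : ℕ → ℝ} (hf : ∀ ε : ℝ, 0 < ε → ∀ᶠ n : ℕ in atTop, f n ≤ ε ^ n)
    {c : ℝ} (hg : ∀ n, g n ≤ c * f n) (hf0 : ∀ n, 0 ≤ f n) :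
    ∀ ε : ℝ, 0 < ε → ∀ᶠ n : ℕ in atTop, g n ≤ ε ^ n := by
  intro ε hε
  have h1 := hf (ε / 2) (by positivity)
  have h2 : ∀ᶠ n : ℕ in atTop, c ≤ 2 ^ n :=
    (tendsto_pow_atTop_atTop_of_one_lt (r := (2:ℝ)) one_lt_two).eventually_ge_atTop c
  filter_upwards [h1, h2] with n h1 h2
  calc g n ≤ c * f n := hg n
    _ ≤ 2 ^ n * (ε / 2) ^ n := by
        apply mul_le_mul h2 h1 (hf0 n) (by positivity)
    _ = ε ^ n := by rw [← mul_pow]; ring_nf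

/-- shift version : bounds on `g (n+1)` in terms of `f n`. -/
lemma quasi_of_le_shift {f g : ℕ → ℝ} (hf : ∀ ε : ℝ, 0 < ε → ∀ᶠ n : ℕ in atTop, f n ≤ ε ^ n)
    {c : ℝ} (hg : ∀ n, g (n + 1) ≤ c * f n) (hf0 : ∀ n, 0 ≤ f n) :
    ∀ ε : ℝ, 0 < ε → ∀ᶠ n : ℕ in atTop, g n ≤ ε ^ n := by
  intro ε hε
  have h1 := hf (ε / 2) (by positivity)
  have h2 : ∀ᶠ n : ℕ in atTop, c / ε ≤ 2 ^ n :=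
    (tendsto_pow_atTop_atTop_of_one_lt (r := (2:ℝ)) one_lt_two).eventually_ge_atTop (c / ε)
  rw [eventually_atTop] at h1 h2 ⊢
  obtain ⟨N1, h1⟩ := h1; obtain ⟨N2, h2⟩ := h2
  refine ⟨N1 + N2 + 1, fun n hn => ?_⟩
  obtain ⟨m, rfl⟩ : ∃ m, n = m + 1 := ⟨n - 1, by omega⟩
  have hm1 : N1 ≤ m := by omega
  have hm2 : N2 ≤ m := by omega
  calc g (m + 1) ≤ c * f m := hg m
    _ ≤ (ε * 2 ^ m) * (ε / 2) ^ m := by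
        apply mul_le_mul _ (h1 m hm1) (hf0 m) (by positivity)
        · have h2' := h2 m hm2
          rw [div_le_iff₀ hε] at h2'
          linarith
    _ = ε ^ (m + 1) := by
        rw [div_pow, pow_succ']
        field_simp

lemma summable_aux {c : ℕ → ℝ} (h0 : ∀ n, 0 ≤ c n)
    (hq : ∀ ε : ℝ, 0 < ε → ∀ᶠ n : ℕ in atTop, c n ≤ ε ^ n) {r : ℝ} (hr : 0 ≤ r) :
    Summable (fun n => c n * r ^ n) := by
  have hε : (0:ℝ) < (2 * (r + 1))⁻¹ := by positivity
  apply Summable.of_norm_bounded_eventually_nat (g := fun n => (1/2 : ℝ) ^ n)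
    (summable_geometric_of_lt_one (by norm_num) (by norm_num))
  filter_upwards [hq _ hε] with n hn
  have habs : ‖c n * r ^ n‖ = c n * r ^ n := by
    rw [Real.norm_eq_abs, abs_of_nonneg (mul_nonneg (h0 n) (by positivity))]
  rw [habs]
  calc c n * r ^ n ≤ ((2 * (r + 1))⁻¹) ^ n * r ^ n := by
        apply mul_le_mul_of_nonneg_right hn (by positivity)
    _ = ((2 * (r + 1))⁻¹ * r) ^ n := by rw [mul_pow]
    _ ≤ (1/2 : ℝ) ^ n := by
        apply pow_le_pow_left₀ (by positivity)
        rw [inv_mul_eq_div, div_le_div_iff₀ (by positivity) (by norm_num)]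
        nlinarith

lemma exists_uniform_bound {C : ℕ → E}
    (hC : ∀ ε : ℝ, 0 < ε → ∀ᶠ n : ℕ in atTop, ‖C n‖ ≤ ε ^ n) :
    ∃ M : ℝ, 0 < M ∧ ∀ n, ‖C n‖ ≤ M := by
  obtain ⟨N, hN⟩ := eventually_atTop.1 (hC 1 one_pos)
  set M0 : ℝ := (Finset.range (N + 1)).sup' (by simp) (fun n => ‖C n‖) with hM0
  refine ⟨max M0 1, lt_of_lt_of_le one_pos (le_max_right _ _), fun n => ?_⟩
  rcases le_or_gt n N with h | h
  · exact le_trans (Finset.le_sup' (fun n => ‖C n‖)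
      (Finset.mem_range.2 (by omega))) (le_max_left _ _)
  · have := hN n (by omega)
    simpa using le_trans this (le_max_right _ _)

lemma norm_tsum_pow_succ_le {C : ℕ → E} [CompleteSpace E] {M : ℝ} (hM : ∀ n, ‖C n‖ ≤ M)
    {u : ℂ} (hu : ‖u‖ ≤ 1 / 2) :
    ‖∑' n, u ^ (n + 1) • C n‖ ≤ 2 * M * ‖u‖ := by
  have hM0 : 0 ≤ M := le_trans (norm_nonneg _) (hM 0)
  have hb : ∀ n : ℕ, ‖u ^ (n + 1) • C n‖ ≤ M * ‖u‖ * (1 / 2 : ℝ) ^ n := by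
    intro n
    rw [norm_smul, norm_pow, pow_succ']
    calc ‖u‖ * ‖u‖ ^ n * ‖C n‖ ≤ ‖u‖ * (1/2 : ℝ) ^ n * M := by
          apply mul_le_mul _ (hM n) (norm_nonneg _) (by positivity)
          exact mul_le_mul_of_nonneg_left (pow_le_pow_left₀ (norm_nonneg u) hu n)
            (norm_nonneg u)
      _ = M * ‖u‖ * (1/2 : ℝ) ^ n := by ring
  have hsg : Summable (fun n : ℕ => M * ‖u‖ * (1 / 2 : ℝ) ^ n) :=
    (summable_geometric_of_lt_one (by norm_num) (by norm_num)).mul_left _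
  have hsn : Summable fun n : ℕ => ‖u ^ (n + 1) • C n‖ :=
    Summable.of_nonneg_of_le (fun n => norm_nonneg _) hb hsg
  calc ‖∑' n, u ^ (n + 1) • C n‖ ≤ ∑' n, ‖u ^ (n + 1) • C n‖ := norm_tsum_le_tsum_norm hsn
    _ ≤ ∑' n : ℕ, M * ‖u‖ * (1 / 2 : ℝ) ^ n := Summable.tsum_le_tsum hb hsn hsg
    _ = M * ‖u‖ * (1 - 1/2)⁻¹ := by
        rw [tsum_mul_left, tsum_geometric_of_lt_one (by norm_num) (by norm_num)]
    _ = 2 * M * ‖u‖ := by norm_num; ring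

lemma eq_of_hasSum_telescope {g : ℕ → E} {S : E}
    (h : HasSum (fun n => g n - g (n + 1)) S) (hg : Tendsto g atTop (nhds 0)) :
    S = g 0 := by
  refine tendsto_nhds_unique h.tendsto_sum_nat ?_
  have : ∀ n : ℕ, ∑ i ∈ Finset.range n, (g i - g (i + 1)) = g 0 - g n :=
    fun n => Finset.sum_range_sub' g n
  simp only [this]
  simpa using tendsto_const_nhds.sub hg

variable [CompleteSpace E]

lemma summable_pow_smul {C : ℕ → E}
    (hC : ∀ ε : ℝ, 0 < ε → ∀ᶠ n : ℕ in atTop, ‖C n‖ ≤ ε ^ n) (u : ℂ) :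
    Summable (fun n => u ^ n • C n) := by
  apply Summable.of_norm
  have := summable_aux (fun n => norm_nonneg (C n)) hC (norm_nonneg u)
  convert this using 2 with n
  rw [norm_smul, norm_pow, mul_comm]

/-- the power series `∑ u^n • C n` with superexponentially decaying coefficients is entire. -/
lemma differentiable_pow_smul {C : ℕ → E}
    (hC : ∀ ε : ℝ, 0 < ε → ∀ᶠ n : ℕ in atTop, ‖C n‖ ≤ ε ^ n) :
    Differentiable ℂ (fun u : ℂ => ∑' n, u ^ n • C n) := by
  set p : FormalMultilinearSeries ℂ ℂ E :=
    fun n => ContinuousMultilinearMap.mkPiRing ℂ (Fin n) (C n) with hp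
  have hnorm : ∀ n, ‖p n‖ = ‖C n‖ := fun n => ContinuousMultilinearMap.norm_mkPiRing _
  have hrad : p.radius = ⊤ := by
    apply ENNReal.eq_top_of_forall_nnreal_le
    intro r
    apply p.le_radius_of_summable
    have := summable_aux (fun n => norm_nonneg (C n)) hC (r := (r:ℝ)) r.coe_nonneg
    convert this using 2 with n
    rw [hnorm]
  have hs : ∀ u : ℂ, u ∈ Metric.eball (0:ℂ) p.radius := by
    intro u
    rw [hrad, EMetric.mem_ball]
    exact edist_lt_top _ _
  have hball := (p.hasFPowerSeriesOnBall
    (by rw [hrad]; exact ENNReal.zero_lt_top)).differentiableOn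
  have heq : (fun u : ℂ => ∑' n, u ^ n • C n) = p.sum := by
    funext u
    rw [FormalMultilinearSeries.sum]
    apply tsum_congr
    intro n
    rw [hp]
    simp [ContinuousMultilinearMap.mkPiRing_apply]
  rw [heq]
  intro u
  exact (hball u (hs u)).differentiableAt (EMetric.isOpen_ball.mem_nhds (hs u))

def shiftSeq (C : ℕ → E) : ℕ → E
  | 0 => 0
  | (n+1) => C n

omit [NormedSpace ℂ E] [CompleteSpace E] in
@[simp] lemma shiftSeq_zero (C : ℕ → E) : shiftSeq C 0 = 0 := rfl

omit [NormedSpace ℂ E] [CompleteSpace E] in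
@[simp] lemma shiftSeq_succ (C : ℕ → E) (n : ℕ) : shiftSeq C (n+1) = C n := rfl

omit [NormedSpace ℂ E] [CompleteSpace E] in
lemma quasi_shift {C : ℕ → E}
    (hC : ∀ ε : ℝ, 0 < ε → ∀ᶠ n : ℕ in atTop, ‖C n‖ ≤ ε ^ n) :
    ∀ ε : ℝ, 0 < ε → ∀ᶠ n : ℕ in atTop, ‖shiftSeq C n‖ ≤ ε ^ n := by
  exact quasi_of_le_shift hC (c := 1) (g := fun n => ‖shiftSeq C n‖)
    (fun n => by simpa using le_refl ‖C n‖) (fun n => norm_nonneg _)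

lemma summable_pow_succ_smul {C : ℕ → E}
    (hC : ∀ ε : ℝ, 0 < ε → ∀ᶠ n : ℕ in atTop, ‖C n‖ ≤ ε ^ n) (u : ℂ) :
    Summable (fun n => u ^ (n + 1) • C n) := by
  have := (summable_pow_smul (quasi_shift hC) u).comp_injective (add_left_injective 1)
  simpa [Function.comp_def] using this

lemma tsum_pow_succ_eq {C : ℕ → E}
    (hC : ∀ ε : ℝ, 0 < ε → ∀ᶠ n : ℕ in atTop, ‖C n‖ ≤ ε ^ n) (u : ℂ) :
    (∑' n, u ^ n • shiftSeq C n) = ∑' n, u ^ (n + 1) • C n := by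
  rw [Summable.tsum_eq_zero_add (summable_pow_smul (quasi_shift hC) u)]
  simp

lemma differentiable_pow_succ_smul {C : ℕ → E}
    (hC : ∀ ε : ℝ, 0 < ε → ∀ᶠ n : ℕ in atTop, ‖C n‖ ≤ ε ^ n) :
    Differentiable ℂ (fun u : ℂ => ∑' n, u ^ (n + 1) • C n) := by
  have := differentiable_pow_smul (quasi_shift hC)
  convert this using 2 with u
  rw [tsum_pow_succ_eq hC]

end LaurentAux

set_option maxHeartbeats 3200000 in
theorem projections_annihilate
    {H K : Type*} [NormedAddCommGroup H] [NormedSpace ℂ H] [CompleteSpace H]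
    [NormedAddCommGroup K] [NormedSpace ℂ K] [CompleteSpace K]
    (A₀ A₁ : H →L[ℂ] K) (m : ℕ) (z : Fin m → ℂ) (hz : Function.Injective z)
    (Res : ℂ → (K →L[ℂ] H))
    (hRes : ∀ w : ℂ, (∀ k, w ≠ z k) →
      (Res w).comp (A₀ + w • A₁) = 1 ∧ (A₀ + w • A₁).comp (Res w) = 1)
    (Rm1 R0 : Fin m → (K →L[ℂ] H))
    (h1 : ∀ k, (Rm1 k).comp A₁ + (R0 k).comp (A₀ + z k • A₁) = 1)
    (h1' : ∀ k, A₁.comp (Rm1 k) + (A₀ + z k • A₁).comp (R0 k) = 1)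
    (h2 : ∀ k, ∀ Ai ∈ ({A₀ + z k • A₁, A₁} : Set (H →L[ℂ] K)),
      ((Rm1 k).comp Ai).comp (R0 k) = 0 ∧ ((R0 k).comp Ai).comp (Rm1 k) = 0)
    (h3 : ∀ k, limsup
      (fun j : ℕ => ‖((Rm1 k).comp (A₀ + z k • A₁)) ^ j‖ ^ ((j : ℝ)⁻¹)) atTop ≤ 0)
    (h3' : ∀ k j, j ≠ k → limsup
      (fun n : ℕ => ‖((R0 k).comp A₁) ^ n‖ ^ ((n : ℝ)⁻¹)) atTop ≤ 1 / ‖z j - z k‖) :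
    ∀ k ℓ, k ≠ ℓ →
      ((Rm1 k).comp A₁).comp ((Rm1 ℓ).comp A₁) = 0 ∧
      (A₁.comp (Rm1 k)).comp (A₁.comp (Rm1 ℓ)) = 0 := by
  -- the central claim
  have key : ∀ k ℓ, k ≠ ℓ → (Rm1 k).comp (A₁.comp (Rm1 ℓ)) = 0 := by
    intro k ℓ hkl
    -- notation
    set Bk : H →L[ℂ] K := A₀ + z k • A₁ with hBk
    set Bl : H →L[ℂ] K := A₀ + z ℓ • A₁ with hBl
    set Tk : H →L[ℂ] H := -((Rm1 k).comp Bk) with hTk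
    set Tl : H →L[ℂ] H := -((Rm1 ℓ).comp Bl) with hTl
    set J : K →L[ℂ] K := A₁.comp (Rm1 ℓ) with hJ
    set Pk : H →L[ℂ] H := (Rm1 k).comp A₁ with hPk
    set Ck : ℕ → (K →L[ℂ] H) := fun n => (Tk ^ n).comp (Rm1 k) with hCk
    set Cl : ℕ → (K →L[ℂ] H) := fun n => (Tl ^ n).comp (Rm1 ℓ) with hCl
    -- power norms
    have hpow_norm : ∀ (X : H →L[ℂ] H) (n : ℕ), ‖(-X) ^ n‖ = ‖X ^ n‖ := by
      intro X n
      rw [show -X = (-1 : ℂ) • X by simp, smul_pow]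
      rw [norm_smul ((-1 : ℂ) ^ n) (X ^ n)]
      simp
    have hpow_le : ∀ (X : H →L[ℂ] H) (n : ℕ), ‖X ^ n‖ ≤ ‖X‖ ^ n := by
      intro X n
      cases n with
      | zero => rw [pow_zero, pow_zero]; exact ContinuousLinearMap.norm_id_le
      | succ n => exact norm_pow_le' X n.succ_pos
    -- quasinilpotency
    have qTk : ∀ ε : ℝ, 0 < ε → ∀ᶠ n : ℕ in atTop, ‖Tk ^ n‖ ≤ ε ^ n := by
      have h0 := quasi_of_limsup (f := fun j => ‖((Rm1 k).comp Bk) ^ j‖)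
        (fun n => norm_nonneg _) (norm_nonneg ((Rm1 k).comp Bk))
        (hpow_le _) (h3 k)
      intro ε hε
      filter_upwards [h0 ε hε] with n hn
      rw [hTk, hpow_norm]
      exact hn
    have qTl : ∀ ε : ℝ, 0 < ε → ∀ᶠ n : ℕ in atTop, ‖Tl ^ n‖ ≤ ε ^ n := by
      have h0 := quasi_of_limsup (f := fun j => ‖((Rm1 ℓ).comp Bl) ^ j‖)
        (fun n => norm_nonneg _) (norm_nonneg ((Rm1 ℓ).comp Bl))
        (hpow_le _) (h3 ℓ)
      intro ε hε
      filter_upwards [h0 ε hε] with n hn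
      rw [hTl, hpow_norm]
      exact hn
    have qCk : ∀ ε : ℝ, 0 < ε → ∀ᶠ n : ℕ in atTop, ‖Ck n‖ ≤ ε ^ n := by
      apply quasi_of_le qTk (c := ‖Rm1 k‖) _ (fun n => norm_nonneg _)
      intro n
      rw [hCk, mul_comm]
      exact ContinuousLinearMap.opNorm_comp_le _ _
    have qCl : ∀ ε : ℝ, 0 < ε → ∀ᶠ n : ℕ in atTop, ‖Cl n‖ ≤ ε ^ n := by
      apply quasi_of_le qTl (c := ‖Rm1 ℓ‖) _ (fun n => norm_nonneg _)
      intro n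
      rw [hCl, mul_comm]
      exact ContinuousLinearMap.opNorm_comp_le _ _
    -- the two principal parts
    set Pr : ℂ → (K →L[ℂ] H) := fun w => ∑' n, ((w - z k)⁻¹) ^ (n + 1) • Ck n with hPr
    set Prq : ℂ → (K →L[ℂ] H) := fun w => ∑' n, ((w - z ℓ)⁻¹) ^ (n + 1) • Cl n with hPrq
    have hPrw : ∀ w : ℂ, Pr w = ∑' n, ((w - z k)⁻¹) ^ (n + 1) • Ck n := fun w => by
      rw [hPr]
    have hPrqw : ∀ w : ℂ, Prq w = ∑' n, ((w - z ℓ)⁻¹) ^ (n + 1) • Cl n := fun w => by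
      rw [hPrq]
    -- algebraic identities
    have hRA : (Rm1 k).comp A₁ = 1 - (R0 k).comp Bk := eq_sub_of_add_eq (h1 k)
    have hAR : A₁.comp (Rm1 ℓ) = 1 - Bl.comp (R0 ℓ) := eq_sub_of_add_eq (h1' ℓ)
    have h2kB := (h2 k Bk (Or.inl rfl)).1
    have h2lB := (h2 ℓ Bl (Or.inl rfl)).2
    have hTkR0 : Tk.comp (R0 k) = 0 := by
      rw [hTk, ContinuousLinearMap.neg_comp, h2kB, neg_zero]
    have hpowR0 : ∀ n : ℕ, (Tk ^ (n + 1)).comp (R0 k) = 0 := by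
      intro n
      rw [pow_succ, ContinuousLinearMap.mul_def, ContinuousLinearMap.comp_assoc, hTkR0,
        ContinuousLinearMap.comp_zero]
    have hL1 : ∀ n : ℕ, (Tk ^ (n + 1)).comp ((Rm1 k).comp A₁) = Tk ^ (n + 1) := by
      intro n
      rw [hRA, ContinuousLinearMap.comp_sub, ContinuousLinearMap.one_def,
        ContinuousLinearMap.comp_id, ← ContinuousLinearMap.comp_assoc, hpowR0,
        ContinuousLinearMap.zero_comp, sub_zero]
    have hTlR : Tl.comp (Rm1 ℓ) = -((Rm1 ℓ).comp (Bl.comp (Rm1 ℓ))) := by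
      rw [hTl, ContinuousLinearMap.neg_comp, ContinuousLinearMap.comp_assoc]
    have hR1 : ∀ n : ℕ, A₁.comp (Cl (n + 1)) = -(Bl.comp (Cl n)) := by
      simp only [hCl]
      have hpowsucc : ∀ n : ℕ, (Tl ^ (n + 1)).comp (Rm1 ℓ) =
          -(((Tl ^ n).comp (Rm1 ℓ)).comp (Bl.comp (Rm1 ℓ))) := by
        intro n
        rw [pow_succ, ContinuousLinearMap.mul_def, ContinuousLinearMap.comp_assoc, hTlR,
          ContinuousLinearMap.comp_neg, ContinuousLinearMap.comp_assoc]
      intro n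
      induction n with
      | zero =>
        rw [hpowsucc 0]
        simp only [pow_zero, ContinuousLinearMap.one_def, ContinuousLinearMap.id_comp]
        rw [ContinuousLinearMap.comp_neg, ← ContinuousLinearMap.comp_assoc, hAR,
          ContinuousLinearMap.sub_comp, ContinuousLinearMap.one_def,
          ContinuousLinearMap.id_comp, ContinuousLinearMap.comp_assoc,
          ← ContinuousLinearMap.comp_assoc (R0 ℓ) Bl (Rm1 ℓ), h2lB,
          ContinuousLinearMap.comp_zero, sub_zero]
      | succ n ih =>
        rw [hpowsucc (n + 1), ContinuousLinearMap.comp_neg, ← ContinuousLinearMap.comp_assoc,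
          ih, ContinuousLinearMap.neg_comp, neg_neg, ContinuousLinearMap.comp_assoc,
          ContinuousLinearMap.comp_assoc,
          show (Rm1 ℓ).comp (Bl.comp (Rm1 ℓ)) = -(Tl.comp (Rm1 ℓ)) by rw [hTlR, neg_neg],
          ContinuousLinearMap.comp_neg, ContinuousLinearMap.comp_neg,
          ← ContinuousLinearMap.comp_assoc (Tl ^ n) Tl (Rm1 ℓ),
          ← ContinuousLinearMap.mul_def, ← pow_succ]
    -- quasinilpotent coefficient families used for the telescopes
    have qDk : ∀ ε : ℝ, 0 < ε → ∀ᶠ n : ℕ in atTop,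
        ‖(Tk ^ n).comp ((Rm1 k).comp A₁)‖ ≤ ε ^ n := by
      apply quasi_of_le qTk (c := ‖(Rm1 k).comp A₁‖) _ (fun n => norm_nonneg _)
      intro n
      rw [mul_comm]
      exact ContinuousLinearMap.opNorm_comp_le _ _
    have qDl : ∀ ε : ℝ, 0 < ε → ∀ᶠ n : ℕ in atTop, ‖A₁.comp (Cl n)‖ ≤ ε ^ n := by
      apply quasi_of_le qCl (c := ‖A₁‖) _ (fun n => norm_nonneg _)
      intro n
      exact ContinuousLinearMap.opNorm_comp_le _ _
    -- left fundamental identity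
    have hPrA : ∀ w : ℂ, w ≠ z k → (Pr w).comp (A₀ + w • A₁) = (Rm1 k).comp A₁ := by
      intro w hw
      have hζ : w - z k ≠ 0 := sub_ne_zero.2 hw
      set u : ℂ := (w - z k)⁻¹ with hu
      have hsum : HasSum (fun n => u ^ (n + 1) • Ck n) (Pr w) := by
        rw [hPrw w, ← hu]
        exact (summable_pow_succ_smul qCk u).hasSum
      set Φ : (K →L[ℂ] H) →L[ℂ] (H →L[ℂ] H) :=
        (ContinuousLinearMap.compL ℂ H K H).flip (A₀ + w • A₁) with hΦ
      have happ := hsum.mapL Φ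
      have hΦap : ∀ X : K →L[ℂ] H, Φ X = X.comp (A₀ + w • A₁) := fun X => rfl
      set D : ℕ → (H →L[ℂ] H) := fun n => (Tk ^ n).comp ((Rm1 k).comp A₁) with hD
      set g : ℕ → (H →L[ℂ] H) := fun n => u ^ n • D n with hg
      have hAw : A₀ + w • A₁ = Bk + (w - z k) • A₁ := by
        rw [hBk, sub_smul]; abel
      have hterm : ∀ n : ℕ, (u ^ (n + 1) • Ck n).comp (A₀ + w • A₁) = g n - g (n + 1) := by
        intro n
        rw [ContinuousLinearMap.smul_comp, hAw, ContinuousLinearMap.comp_add,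
          ContinuousLinearMap.comp_smul, smul_add, smul_smul]
        have hCB : (Ck n).comp Bk = -(Tk ^ (n + 1)) := by
          rw [hCk]
          dsimp only
          rw [ContinuousLinearMap.comp_assoc,
            show (Rm1 k).comp Bk = -Tk by rw [hTk, neg_neg],
            ContinuousLinearMap.comp_neg, ← ContinuousLinearMap.mul_def, ← pow_succ]
        have hscal : u ^ (n + 1) * (w - z k) = u ^ n := by
          rw [pow_succ, mul_assoc, hu, inv_mul_cancel₀ hζ, mul_one]
        have hCA : (Ck n).comp A₁ = D n := by
          rw [hCk, hD]
          exact ContinuousLinearMap.comp_assoc _ _ _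
        rw [hCB, hscal, hCA, smul_neg, hg]
        dsimp only
        rw [hD]
        dsimp only
        rw [hL1 n]
        abel
      have hgten : Tendsto g atTop (nhds 0) := by
        rw [hg]
        exact (summable_pow_smul qDk u).tendsto_atTop_zero
      simp only [hΦap] at happ
      simp only [hterm] at happ
      have hfin := eq_of_hasSum_telescope happ hgten
      rw [hfin, hg]
      simp only [hD, pow_zero, one_smul, ContinuousLinearMap.one_def,
        ContinuousLinearMap.id_comp]
    -- right fundamental identity
    have hAPrq : ∀ w : ℂ, w ≠ z ℓ → (A₀ + w • A₁).comp (Prq w) = A₁.comp (Rm1 ℓ) := by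
      intro w hw
      have hζ : w - z ℓ ≠ 0 := sub_ne_zero.2 hw
      set u : ℂ := (w - z ℓ)⁻¹ with hu
      have hsum : HasSum (fun n => u ^ (n + 1) • Cl n) (Prq w) := by
        rw [hPrqw w, ← hu]
        exact (summable_pow_succ_smul qCl u).hasSum
      set Θ : (K →L[ℂ] H) →L[ℂ] (K →L[ℂ] K) :=
        ContinuousLinearMap.compL ℂ K H K (A₀ + w • A₁) with hΘ
      have happ := hsum.mapL Θ
      have hΘap : ∀ X : K →L[ℂ] H, Θ X = (A₀ + w • A₁).comp X := fun X => rfl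
      set g : ℕ → (K →L[ℂ] K) := fun n => u ^ n • (A₁.comp (Cl n)) with hg
      have hAw : A₀ + w • A₁ = Bl + (w - z ℓ) • A₁ := by
        rw [hBl, sub_smul]; abel
      have hterm : ∀ n : ℕ, (A₀ + w • A₁).comp (u ^ (n + 1) • Cl n) = g n - g (n + 1) := by
        intro n
        rw [ContinuousLinearMap.comp_smul, hAw, ContinuousLinearMap.add_comp,
          ContinuousLinearMap.smul_comp, smul_add, smul_smul]
        have hBC : Bl.comp (Cl n) = -(A₁.comp (Cl (n + 1))) := by
          rw [hR1 n, neg_neg]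
        have hscal : u ^ (n + 1) * (w - z ℓ) = u ^ n := by
          rw [pow_succ, mul_assoc, hu, inv_mul_cancel₀ hζ, mul_one]
        rw [hBC, hscal, smul_neg, hg]
        dsimp only
        abel
      have hgten : Tendsto g atTop (nhds 0) := by
        rw [hg]
        exact (summable_pow_smul qDl u).tendsto_atTop_zero
      simp only [hΘap] at happ
      simp only [hterm] at happ
      have hfin := eq_of_hasSum_telescope happ hgten
      rw [hfin, hg]
      simp only [hCl, pow_zero, one_smul, ContinuousLinearMap.one_def,
        ContinuousLinearMap.id_comp]
    -- relation with the resolvent away from all singular points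
    have hPrRes : ∀ w : ℂ, (∀ j, w ≠ z j) →
        Pr w = ((Rm1 k).comp A₁).comp (Res w) := by
      intro w hw
      have h := (hRes w hw).2
      calc Pr w = (Pr w).comp ((A₀ + w • A₁).comp (Res w)) := by
            rw [h, ContinuousLinearMap.one_def, ContinuousLinearMap.comp_id]
        _ = ((Pr w).comp (A₀ + w • A₁)).comp (Res w) :=
            (ContinuousLinearMap.comp_assoc _ _ _).symm
        _ = ((Rm1 k).comp A₁).comp (Res w) := by rw [hPrA w (hw k)]
    have hResPrq : ∀ w : ℂ, (∀ j, w ≠ z j) →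
        Prq w = (Res w).comp (A₁.comp (Rm1 ℓ)) := by
      intro w hw
      have h := (hRes w hw).1
      calc Prq w = ((Res w).comp (A₀ + w • A₁)).comp (Prq w) := by
            rw [h, ContinuousLinearMap.one_def, ContinuousLinearMap.id_comp]
        _ = (Res w).comp ((A₀ + w • A₁).comp (Prq w)) :=
            ContinuousLinearMap.comp_assoc _ _ _
        _ = (Res w).comp (A₁.comp (Rm1 ℓ)) := by rw [hAPrq w (hw ℓ)]
    have hEq : ∀ w : ℂ, (∀ j, w ≠ z j) → (Pr w).comp J = Pk.comp (Prq w) := by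
      intro w hw
      rw [hPrRes w hw, hResPrq w hw, hJ, hPk, ContinuousLinearMap.comp_assoc]
    -- differentiability of the principal parts off their poles
    have hdPr : ∀ w : ℂ, w ≠ z k → DifferentiableAt ℂ Pr w := by
      intro w hw
      have hDp := differentiable_pow_succ_smul qCk
      have hcomp : Pr = (fun u : ℂ => ∑' n, u ^ (n + 1) • Ck n) ∘
          (fun w : ℂ => (w - z k)⁻¹) := by
        funext v
        rw [hPrw v]
        rfl
      rw [hcomp]
      exact DifferentiableAt.comp w (hDp.differentiableAt)
        (((differentiableAt_id.sub (differentiableAt_const _))).inv (sub_ne_zero.2 hw))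
    have hdPrq : ∀ w : ℂ, w ≠ z ℓ → DifferentiableAt ℂ Prq w := by
      intro w hw
      have hDp := differentiable_pow_succ_smul qCl
      have hcomp : Prq = (fun u : ℂ => ∑' n, u ^ (n + 1) • Cl n) ∘
          (fun w : ℂ => (w - z ℓ)⁻¹) := by
        funext v
        rw [hPrqw v]
        rfl
      rw [hcomp]
      exact DifferentiableAt.comp w (hDp.differentiableAt)
        (((differentiableAt_id.sub (differentiableAt_const _))).inv (sub_ne_zero.2 hw))
    have hzkl : z k ≠ z ℓ := fun h => hkl (hz h)
    -- the glued entire function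
    set F : ℂ → (K →L[ℂ] H) :=
      fun w => if w = z k then Pk.comp (Prq w) else (Pr w).comp J with hF
    have hFk : ∀ w : ℂ, w ≠ z k → F w = (Pr w).comp J := by
      intro w hw
      simp only [hF, if_neg hw]
    have hFdiff : Differentiable ℂ F := by
      intro w₀
      by_cases hw : w₀ = z k
      · have hφ : DifferentiableAt ℂ (fun w => Pk.comp (Prq w)) w₀ :=
          (differentiableAt_const Pk).clm_comp
            (hdPrq _ (by rw [hw]; exact hzkl))
        apply hφ.congr_of_eventuallyEq
        have hev : ∀ᶠ w in nhds w₀, ∀ j, j ≠ k → w ≠ z j := by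
          rw [eventually_all]
          intro j
          by_cases hj : j = k
          · exact Eventually.of_forall fun w hc => absurd hj hc
          · filter_upwards [eventually_ne_nhds
              (show w₀ ≠ z j by rw [hw]; exact fun h => hj (hz h).symm)] with w hw
            exact fun _ => hw
        filter_upwards [hev] with w hw
        by_cases hwz : w = z k
        · simp only [hF, if_pos hwz]
        · have hall : ∀ j, w ≠ z j := by
            intro j
            by_cases hj : j = k
            · rw [hj]; exact hwz
            · exact hw j hj
          rw [hFk w hwz, hEq w hall]
      · have hφ : DifferentiableAt ℂ (fun w => (Pr w).comp J) w₀ :=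
          (hdPr w₀ hw).clm_comp (differentiableAt_const J)
        apply hφ.congr_of_eventuallyEq
        filter_upwards [eventually_ne_nhds hw] with w hw'
        exact hFk w hw'
    -- bounds
    obtain ⟨Mk, hMk0, hMk⟩ := exists_uniform_bound qCk
    have hinv : ∀ w : ℂ, 2 ≤ ‖w - z k‖ → ‖(w - z k)⁻¹‖ ≤ 1 / 2 := by
      intro w hw2
      rw [norm_inv]
      rw [inv_le_comm₀ (by linarith) (by norm_num)]
      linarith
    have hPr_small : ∀ w : ℂ, 2 ≤ ‖w - z k‖ →
        ‖F w‖ ≤ 2 * Mk * ‖J‖ * ‖(w - z k)⁻¹‖ := by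
      intro w hw2
      have hwne : w ≠ z k := by
        intro h
        rw [h, sub_self, norm_zero] at hw2
        linarith
      have hu := hinv w hw2
      rw [hFk w hwne]
      have hPrle : ‖Pr w‖ ≤ 2 * Mk * ‖(w - z k)⁻¹‖ := by
        rw [hPrw w]
        exact norm_tsum_pow_succ_le hMk hu
      calc ‖(Pr w).comp J‖ ≤ ‖Pr w‖ * ‖J‖ := ContinuousLinearMap.opNorm_comp_le _ _
        _ ≤ (2 * Mk * ‖(w - z k)⁻¹‖) * ‖J‖ :=
            mul_le_mul_of_nonneg_right hPrle (norm_nonneg J)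
        _ = 2 * Mk * ‖J‖ * ‖(w - z k)⁻¹‖ := by ring
    have hFbdd : Bornology.IsBounded (Set.range F) := by
      obtain ⟨Cb, hCb⟩ := (isCompact_closedBall (z k) 2).exists_bound_of_continuousOn
        (hFdiff.continuous.continuousOn)
      rw [isBounded_iff_forall_norm_le]
      refine ⟨max Cb (Mk * ‖J‖), ?_⟩
      rintro y ⟨w, rfl⟩
      by_cases hw : w ∈ Metric.closedBall (z k) 2
      · exact le_trans (hCb w hw) (le_max_left _ _)
      · have hdist : 2 ≤ ‖w - z k‖ := by
          rw [Metric.mem_closedBall, dist_eq_norm] at hw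
          linarith [not_le.1 hw]
        have h1 := hPr_small w hdist
        have hu := hinv w hdist
        refine le_trans h1 (le_trans ?_ (le_max_right _ _))
        calc 2 * Mk * ‖J‖ * ‖(w - z k)⁻¹‖ ≤ 2 * Mk * ‖J‖ * (1 / 2) := by
              apply mul_le_mul_of_nonneg_left hu (by positivity)
          _ = Mk * ‖J‖ := by ring
    have hconst : ∀ w : ℂ, F w = F (z k) := fun w =>
      hFdiff.apply_eq_apply_of_bounded hFbdd w (z k)
    -- the auxiliary points `z k + (j + 2)`
    have hwjnorm : ∀ j : ℕ, ‖(z k + ((j : ℂ) + 2)) - z k‖ = (j : ℝ) + 2 := by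
      intro j
      have h1 : (z k + ((j : ℂ) + 2)) - z k = ((j : ℂ) + 2) := by ring
      have h2 : ((j : ℂ) + 2) = (((j + 2 : ℕ) : ℝ) : ℂ) := by push_cast; ring
      rw [h1, h2, Complex.norm_real, Real.norm_eq_abs, abs_of_nonneg (by positivity)]
      push_cast; ring
    have hwj2 : ∀ j : ℕ, 2 ≤ ‖(z k + ((j : ℂ) + 2)) - z k‖ := by
      intro j
      rw [hwjnorm j]
      have : (0:ℝ) ≤ (j:ℝ) := Nat.cast_nonneg j
      linarith
    have htenj : ∀ c : ℝ, Tendsto (fun j : ℕ => c * ((j:ℝ) + 2)⁻¹) atTop (nhds 0) := by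
      intro c
      have h1 : Tendsto (fun j : ℕ => ((j:ℝ) + 2)) atTop atTop :=
        tendsto_atTop_add_const_right atTop 2 tendsto_natCast_atTop_atTop
      have h2 := h1.inv_tendsto_atTop
      simpa using h2.const_mul c
    -- F vanishes identically
    have hF0 : ∀ w : ℂ, F w = 0 := by
      have hzero : F (z k) = 0 := by
        have hle : ∀ j : ℕ, ‖F (z k)‖ ≤ 2 * Mk * ‖J‖ * ((j:ℝ) + 2)⁻¹ := by
          intro j
          have h1 := hPr_small (z k + ((j : ℂ) + 2)) (hwj2 j)
          rw [hconst (z k + ((j : ℂ) + 2))] at h1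
          rwa [norm_inv, hwjnorm j] at h1
        have := ge_of_tendsto (htenj (2 * Mk * ‖J‖)) (Eventually.of_forall hle)
        exact norm_le_zero_iff.1 this
      intro w
      rw [hconst w, hzero]
    -- extraction of the residue
    obtain ⟨MT, hMT0, hMT⟩ := exists_uniform_bound (C := fun n => Tk ^ n) qTk
    have hWle : ∀ j : ℕ, ‖(Rm1 k).comp J‖ ≤
        (2 * (MT * ‖(Rm1 k).comp J‖)) * ((j:ℝ) + 2)⁻¹ := by
      intro j
      set W : K →L[ℂ] H := (Rm1 k).comp J with hW
      set wj : ℂ := z k + ((j : ℂ) + 2) with hwj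
      have hsub : wj - z k = (j : ℂ) + 2 := by rw [hwj]; ring
      have hwjne : wj ≠ z k := by
        intro h
        have := hwjnorm j
        rw [← hwj, h, sub_self, norm_zero] at this
        have h0 : (0:ℝ) ≤ (j:ℝ) := Nat.cast_nonneg j
        linarith
      set u : ℂ := (wj - z k)⁻¹ with hu
      have hunorm : ‖u‖ = ((j:ℝ) + 2)⁻¹ := by
        rw [hu, norm_inv, hwj, hwjnorm j]
      have hu12 : ‖u‖ ≤ 1 / 2 := by
        rw [hu]
        exact hinv wj (by rw [hwj]; exact hwj2 j)
      have hupos : 0 < ‖u‖ := by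
        rw [hunorm]
        positivity
      -- the vanishing series
      have hFwj := hF0 wj
      rw [hFk wj hwjne] at hFwj
      have hsum : HasSum (fun n => u ^ (n + 1) • Ck n) (Pr wj) := by
        rw [hPrw wj, ← hu]
        exact (summable_pow_succ_smul qCk u).hasSum
      have happ := hsum.mapL ((ContinuousLinearMap.compL ℂ K K H).flip J)
      have hap : ∀ X : K →L[ℂ] H, (ContinuousLinearMap.compL ℂ K K H).flip J X
          = X.comp J := fun X => rfl
      simp only [hap] at happ
      rw [hFwj] at happ
      have hptw : ∀ n : ℕ, (u ^ (n + 1) • Ck n).comp J =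
          u ^ (n + 1) • ((Tk ^ n).comp W) := by
        intro n
        rw [ContinuousLinearMap.smul_comp, hCk]
        dsimp only
        rw [ContinuousLinearMap.comp_assoc, hW]
      simp only [hptw] at happ
      have htsum0 : (∑' n, u ^ (n + 1) • ((Tk ^ n).comp W)) = 0 := happ.tsum_eq
      have hsummable : Summable (fun n => u ^ (n + 1) • ((Tk ^ n).comp W)) := happ.summable
      rw [Summable.tsum_eq_zero_add hsummable] at htsum0
      have hhead : u ^ (0 + 1) • ((Tk ^ 0).comp W) = u • W := by
        simp [ContinuousLinearMap.one_def, ContinuousLinearMap.id_comp]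
      rw [hhead] at htsum0
      have hneg : u • W = -(∑' n, u ^ (n + 1 + 1) • ((Tk ^ (n + 1)).comp W)) :=
        eq_neg_of_add_eq_zero_left htsum0
      have htail : (fun n : ℕ => u ^ (n + 1 + 1) • ((Tk ^ (n + 1)).comp W)) =
          fun n : ℕ => u ^ (n + 1) • (u • ((Tk ^ (n + 1)).comp W)) := by
        funext n
        rw [pow_succ, mul_smul]
      have hMb : ∀ n : ℕ, ‖u • ((Tk ^ (n + 1)).comp W)‖ ≤ ‖u‖ * (MT * ‖W‖) := by
        intro n
        rw [norm_smul u ((Tk ^ (n + 1)).comp W)]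
        apply mul_le_mul_of_nonneg_left _ (norm_nonneg u)
        exact le_trans (ContinuousLinearMap.opNorm_comp_le _ _)
          (mul_le_mul_of_nonneg_right (hMT (n + 1)) (norm_nonneg W))
      have hbound : ‖u • W‖ ≤ 2 * (‖u‖ * (MT * ‖W‖)) * ‖u‖ := by
        rw [hneg, norm_neg, htail]
        exact norm_tsum_pow_succ_le hMb hu12
      rw [norm_smul u W] at hbound
      have hdiv : ‖W‖ ≤ 2 * (MT * ‖W‖) * ‖u‖ := by
        have h2 : ‖u‖ * ‖W‖ ≤ ‖u‖ * (2 * (MT * ‖W‖) * ‖u‖) := by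
          calc ‖u‖ * ‖W‖ ≤ 2 * (‖u‖ * (MT * ‖W‖)) * ‖u‖ := hbound
            _ = ‖u‖ * (2 * (MT * ‖W‖) * ‖u‖) := by ring
        exact le_of_mul_le_mul_left h2 hupos
      rwa [hunorm] at hdiv
    have hWzero : ‖(Rm1 k).comp J‖ ≤ 0 :=
      ge_of_tendsto (htenj (2 * (MT * ‖(Rm1 k).comp J‖)))
        (Eventually.of_forall hWle)
    rw [hJ] at hWzero
    exact norm_le_zero_iff.1 hWzero
  intro k ℓ hkl
  have hkey := key k ℓ hkl
  have hpt : ∀ y : K, (Rm1 k) (A₁ ((Rm1 ℓ) y)) = 0 := by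
    intro y
    have := ContinuousLinearMap.ext_iff.1 hkey y
    simpa using this
  constructor
  · ext x
    simpa using hpt (A₁ x)
  · ext x
    simp only [ContinuousLinearMap.comp_apply, ContinuousLinearMap.zero_apply]
    rw [hpt x]
    simp
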